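/- Let Q > 0, let h, f : ℂ → ℝ be continuous, let U ⊆ ℂ be nonempty and bounded, let ε > 0, and let C = 2^k for some k ∈ ℤ be a dyadic scaling factor. Define g : ℂ → ℝ by g(w) := h(w/C) and set T := C^Q · exp(−sup_{z∈U} f(z)). Then D_{h+f}^ε(z,w;U) ≤ D_g^{Tε}(Cz, Cw; CU) for all z, w ∈ U, where CU := {Cu : u ∈ U}. -/

import Mathlib

open MeasureTheory Real Set

noncomputable section

/-- A closed axis-parallel square in the plane (identified with `ℂ`),
given by its bottom-left corner `(x, y)` and its positive side length. -/
structure DySquare where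
  x : ℝ
  y : ℝ
  side : ℝ
  side_pos : 0 < side

namespace DySquare

/-- The closed square as a subset of `ℂ`. -/
def toSet (S : DySquare) : Set ℂ :=
  {z : ℂ | S.x ≤ z.re ∧ z.re ≤ S.x + S.side ∧ S.y ≤ z.im ∧ z.im ≤ S.y + S.side}

/-- The center `v_S` of the square. -/
def center (S : DySquare) : ℂ :=
  ⟨S.x + S.side / 2, S.y + S.side / 2⟩

/-- A square is dyadic if its side length is `2^{-n}` for some `n : ℤ`
and its corners lie in `2^{-n} ℤ²`. -/
def IsDyadic (S : DySquare) : Prop :=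
  ∃ n : ℤ, S.side = 2 ^ (-n) ∧ ∃ a b : ℤ, S.x = a * 2 ^ (-n) ∧ S.y = b * 2 ^ (-n)

end DySquare

/-- The circle average `h_r(z)` of a function `h : ℂ → ℝ`. -/
def circleAvg (h : ℂ → ℝ) (r : ℝ) (z : ℂ) : ℝ :=
  (2 * π)⁻¹ * ∫ θ in (0:ℝ)..(2 * π), h (z + (r : ℂ) * Complex.exp ((θ : ℂ) * Complex.I))

/-- `M_h(S) = exp(h_{|S|/2}(v_S)) |S|^Q`, the "LQG size" of the square `S`. -/
def Mass (h : ℂ → ℝ) (Q : ℝ) (S : DySquare) : ℝ :=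
  Real.exp (circleAvg h (S.side / 2) S.center) * S.side ^ Q

/-- The dyadic tiling `𝒮_h^ε(U)`: dyadic squares `S ⊆ U` with `M_h(S) ≤ ε` such that
every strictly larger dyadic square `S'` with `S ⊊ S' ⊆ U` satisfies `M_h(S') > ε`. -/
def Tiling (h : ℂ → ℝ) (Q ε : ℝ) (U : Set ℂ) : Set DySquare :=
  {S | S.IsDyadic ∧ S.toSet ⊆ U ∧ Mass h Q S ≤ ε ∧
    ∀ S' : DySquare, S'.IsDyadic → S.toSet ⊂ S'.toSet → S'.toSet ⊆ U → ε < Mass h Q S'}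

/-- There is a chain of `k+1` squares of `𝒮_h^ε(U)` from a square containing `z` to a
square containing `w`, consecutive squares being equal or adjacent (i.e. their
intersection contains more than one point). -/
def HasChain (h : ℂ → ℝ) (Q ε : ℝ) (U : Set ℂ) (z w : ℂ) (k : ℕ) : Prop :=
  ∃ S : ℕ → DySquare, (∀ j ≤ k, S j ∈ Tiling h Q ε U) ∧
    z ∈ (S 0).toSet ∧ w ∈ (S k).toSet ∧
    ∀ j, 1 ≤ j → j ≤ k → ((S (j - 1)).toSet ∩ (S j).toSet).Nontrivial

/-- The graph distance `D_h^ε(z, w; U)`, with value `∞` if no finite chain exists. -/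
def GDist (h : ℂ → ℝ) (Q ε : ℝ) (U : Set ℂ) (z w : ℂ) : ℕ∞ :=
  sInf {n : ℕ∞ | ∃ k : ℕ, n = (k : ℕ∞) ∧ HasChain h Q ε U z w k}


namespace ScalingAux

/-- Scaling a square by a positive factor. -/
def scale (c : ℝ) (hc : 0 < c) (S : DySquare) : DySquare :=
  ⟨c * S.x, c * S.y, c * S.side, mul_pos hc S.side_pos⟩

lemma mem_scale_iff (c : ℝ) (hc : 0 < c) (S : DySquare) (z : ℂ) :
    (c : ℂ) * z ∈ (scale c hc S).toSet ↔ z ∈ S.toSet := by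
  have hre : ((c : ℂ) * z).re = c * z.re := by simp [Complex.mul_re]
  have him : ((c : ℂ) * z).im = c * z.im := by simp [Complex.mul_im]
  simp only [DySquare.toSet, Set.mem_setOf_eq, scale, hre, him, ← mul_add]
  constructor
  · rintro ⟨h1, h2, h3, h4⟩
    exact ⟨le_of_mul_le_mul_left h1 hc, le_of_mul_le_mul_left h2 hc,
      le_of_mul_le_mul_left h3 hc, le_of_mul_le_mul_left h4 hc⟩
  · rintro ⟨h1, h2, h3, h4⟩
    exact ⟨by nlinarith, by nlinarith, by nlinarith, by nlinarith⟩

lemma scale_scale (c : ℝ) (hc : 0 < c) (S : DySquare) :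
    scale c hc (scale c⁻¹ (inv_pos.mpr hc) S) = S := by
  simp [scale, mul_inv_cancel_left₀ hc.ne']

lemma scale_dyadic (j : ℤ) (S : DySquare) (hS : S.IsDyadic) (hp : 0 < (2:ℝ) ^ j) :
    (scale ((2:ℝ) ^ j) hp S).IsDyadic := by
  obtain ⟨n, hside, a, b, hx, hy⟩ := hS
  have key : ∀ m : ℤ, (2:ℝ) ^ j * 2 ^ (-m) = 2 ^ (-(m - j)) := by
    intro m
    rw [← zpow_add₀ (two_ne_zero (α := ℝ))]
    congr 1; ring
  refine ⟨n - j, ?_, a, b, ?_, ?_⟩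
  · show (2:ℝ) ^ j * S.side = _
    rw [hside, key]
  · show (2:ℝ) ^ j * S.x = _
    rw [hx, ← key]; ring
  · show (2:ℝ) ^ j * S.y = _
    rw [hy, ← key]; ring

/-- continuity of the circle integrand -/
lemma cont_integrand (h : ℂ → ℝ) (hcont : Continuous h) (r : ℝ) (z : ℂ) :
    Continuous fun θ : ℝ => h (z + (r : ℂ) * Complex.exp ((θ : ℂ) * Complex.I)) := by
  apply hcont.comp
  continuity

lemma circleAvg_add (h f : ℂ → ℝ) (hcont : Continuous h) (hfcont : Continuous f)
    (r : ℝ) (z : ℂ) :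
    circleAvg (fun u => h u + f u) r z = circleAvg h r z + circleAvg f r z := by
  unfold circleAvg
  rw [← mul_add, ← intervalIntegral.integral_add
    ((cont_integrand h hcont r z).intervalIntegrable _ _)
    ((cont_integrand f hfcont r z).intervalIntegrable _ _)]

lemma circleAvg_scale (h : ℂ → ℝ) (c : ℝ) (hc : c ≠ 0) (r : ℝ) (z : ℂ) :
    circleAvg (fun u => h (u / (c : ℂ))) (c * r) ((c : ℂ) * z) = circleAvg h r z := by
  unfold circleAvg
  congr 1
  apply intervalIntegral.integral_congr
  intro θ _
  have hcc : (c : ℂ) ≠ 0 := by exact_mod_cast hc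
  push_cast
  congr 1
  rw [div_eq_iff hcc]
  ring

lemma center_scale (c : ℝ) (hc : 0 < c) (S : DySquare) :
    (scale c hc S).center = (c : ℂ) * S.center := by
  apply Complex.ext
  · show c * S.x + c * S.side / 2 = ((c:ℂ) * S.center).re
    simp [Complex.mul_re, DySquare.center]; ring
  · show c * S.y + c * S.side / 2 = ((c:ℂ) * S.center).im
    simp [Complex.mul_im, DySquare.center]; ring

lemma mass_scale (h : ℂ → ℝ) (Q : ℝ) (c : ℝ) (hc : 0 < c) (S : DySquare) :
    Mass (fun u => h (u / (c : ℂ))) Q (scale c hc S) = c ^ Q * Mass h Q S := by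
  unfold Mass
  have h1 : (scale c hc S).side = c * S.side := rfl
  rw [h1, center_scale, mul_div_assoc c, circleAvg_scale h c hc.ne',
    Real.mul_rpow hc.le S.side_pos.le]
  ring

/-- the circle of `S` is contained in `S`. -/
lemma circle_mem (S : DySquare) (θ : ℝ) :
    S.center + ((S.side / 2 : ℝ) : ℂ) * Complex.exp ((θ : ℂ) * Complex.I) ∈ S.toSet := by
  have hcos1 : Real.cos θ ≤ 1 := Real.cos_le_one θ
  have hcos2 : -1 ≤ Real.cos θ := Real.neg_one_le_cos θ
  have hsin1 : Real.sin θ ≤ 1 := Real.sin_le_one θ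
  have hsin2 : -1 ≤ Real.sin θ := Real.neg_one_le_sin θ
  have hs := S.side_pos
  have hre : (S.center + ((S.side / 2 : ℝ) : ℂ) * Complex.exp ((θ : ℂ) * Complex.I)).re
      = S.x + S.side / 2 + S.side / 2 * Real.cos θ := by
    simp [Complex.add_re, Complex.mul_re, Complex.exp_ofReal_mul_I_re,
      Complex.exp_ofReal_mul_I_im, DySquare.center]
  have him : (S.center + ((S.side / 2 : ℝ) : ℂ) * Complex.exp ((θ : ℂ) * Complex.I)).im
      = S.y + S.side / 2 + S.side / 2 * Real.sin θ := by
    simp [Complex.add_im, Complex.mul_im, Complex.exp_ofReal_mul_I_re,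
      Complex.exp_ofReal_mul_I_im, DySquare.center]
  refine ⟨?_, ?_, ?_, ?_⟩
  · rw [hre]; nlinarith
  · rw [hre]; nlinarith
  · rw [him]; nlinarith
  · rw [him]; nlinarith

lemma circleAvg_le (f : ℂ → ℝ) (hfcont : Continuous f) (r : ℝ) (z : ℂ) (M : ℝ)
    (hb : ∀ θ : ℝ, f (z + (r : ℂ) * Complex.exp ((θ : ℂ) * Complex.I)) ≤ M) :
    circleAvg f r z ≤ M := by
  unfold circleAvg
  have h2π : (0:ℝ) < 2 * π := by positivity
  have hint : (∫ θ in (0:ℝ)..(2*π), f (z + (r : ℂ) * Complex.exp ((θ : ℂ) * Complex.I)))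
      ≤ ∫ _ in (0:ℝ)..(2*π), M := by
    apply intervalIntegral.integral_mono_on h2π.le
      ((cont_integrand f hfcont r z).intervalIntegrable _ _)
      (intervalIntegrable_const)
    intro θ _; exact hb θ
  rw [intervalIntegral.integral_const, smul_eq_mul] at hint
  calc (2 * π)⁻¹ * _ ≤ (2 * π)⁻¹ * ((2 * π - 0) * M) := by
        apply mul_le_mul_of_nonneg_left hint (by positivity)
    _ = M := by field_simp; ring

/-- strict inclusion of squares gives strictly smaller side -/
lemma side_lt_of_ssubset (S S' : DySquare) (hss : S.toSet ⊂ S'.toSet) :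
    S.side < S'.side := by
  have hsub := hss.subset
  have hbl : (⟨S.x, S.y⟩ : ℂ) ∈ S.toSet := by
    refine ⟨le_refl _, ?_, le_refl _, ?_⟩ <;> simp <;> linarith [S.side_pos]
  have htr : (⟨S.x + S.side, S.y + S.side⟩ : ℂ) ∈ S.toSet := by
    refine ⟨?_, le_refl _, ?_, le_refl _⟩ <;> simp <;> linarith [S.side_pos]
  obtain ⟨h1, h2, h3, h4⟩ := hsub hbl
  obtain ⟨h5, h6, h7, h8⟩ := hsub htr
  rcases lt_or_ge S.side S'.side with hlt | hge
  · exact hlt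
  exfalso
  have hx : S.x = S'.x := by simp at h1 h2 h5 h6 ⊢; linarith
  have hy : S.y = S'.y := by simp at h3 h4 h7 h8 ⊢; linarith
  have hside : S.side = S'.side := by simp at h1 h2 h5 h6; linarith
  exact hss.ne (by rw [DySquare.toSet, DySquare.toSet, hx, hy, hside])


lemma scale_congr {c c' : ℝ} (hcc : c = c') (hc : 0 < c) (S : DySquare) :
    scale c hc S = scale c' (hcc ▸ hc) S := by subst hcc; rfl

lemma mass_nonneg (h : ℂ → ℝ) (Q : ℝ) (S : DySquare) : 0 ≤ Mass h Q S := by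
  unfold Mass
  have := S.side_pos
  positivity

/-- Every small dyadic square inside a bounded `U` is contained in a square
of the tiling. -/
lemma exists_tiling_superset (h : ℂ → ℝ) (Q ε : ℝ)
    (U : Set ℂ) (hUb : Bornology.IsBounded U) (S : DySquare) (hdy : S.IsDyadic)
    (hsub : S.toSet ⊆ U) (hmass : Mass h Q S ≤ ε) :
    ∃ S' : DySquare, S' ∈ Tiling h Q ε U ∧ S.toSet ⊆ S'.toSet := by
  obtain ⟨R, hR⟩ : ∃ R, U ⊆ Metric.closedBall 0 R := hUb.subset_closedBall 0
  obtain ⟨N, hN⟩ : ∃ N : ℕ, 2 * R < N := exists_nat_gt (2 * R)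
  have hNpow : (N : ℝ) < 2 ^ (N : ℤ) := by
    have := @Nat.lt_two_pow_self N
    exact_mod_cast this
  set P : ℤ → Prop := fun m => ∃ S' : DySquare, S'.IsDyadic ∧ S'.side = 2 ^ (-m) ∧
    S.toSet ⊆ S'.toSet ∧ S'.toSet ⊆ U ∧ Mass h Q S' ≤ ε with hP
  have hside_bound : ∀ S' : DySquare, S'.toSet ⊆ U → S'.side ≤ 2 * R := by
    intro S' hS'
    have hbl : (⟨S'.x, S'.y⟩ : ℂ) ∈ S'.toSet := by
      refine ⟨le_refl _, ?_, le_refl _, ?_⟩ <;> simp <;> linarith [S'.side_pos]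
    have htr : (⟨S'.x + S'.side, S'.y + S'.side⟩ : ℂ) ∈ S'.toSet := by
      refine ⟨?_, le_refl _, ?_, le_refl _⟩ <;> simp <;> linarith [S'.side_pos]
    have h1 := hR (hS' hbl)
    have h2 := hR (hS' htr)
    simp only [Metric.mem_closedBall, Complex.dist_eq, sub_zero] at h1 h2
    have e1 : |(⟨S'.x, S'.y⟩ : ℂ).re| ≤ ‖(⟨S'.x, S'.y⟩ : ℂ)‖ :=
      Complex.abs_re_le_norm _
    have e2 : |(⟨S'.x + S'.side, S'.y + S'.side⟩ : ℂ).re|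
        ≤ ‖(⟨S'.x + S'.side, S'.y + S'.side⟩ : ℂ)‖ := Complex.abs_re_le_norm _
    have e1' : |S'.x| ≤ R := le_trans e1 h1
    have e2' : |S'.x + S'.side| ≤ R := le_trans e2 h2
    rw [abs_le] at e1' e2'
    linarith [e1'.1, e2'.2]
  have hbddP : ∃ b : ℤ, ∀ m : ℤ, P m → b ≤ m := by
    refine ⟨-(N : ℤ), ?_⟩
    intro m ⟨S', _, hside, _, hS'U, _⟩
    by_contra hlt
    push_neg at hlt
    have h1 : (2:ℝ) ^ (N : ℤ) < 2 ^ (-m) := by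
      apply zpow_lt_zpow_right₀ (by norm_num : (1:ℝ) < 2)
      omega
    have := hside_bound S' hS'U
    rw [hside] at this
    linarith
  have hPne : ∃ m : ℤ, P m := by
    obtain ⟨n, hside, hcorners⟩ := hdy
    exact ⟨n, S, ⟨n, hside, hcorners⟩, hside, subset_refl _, hsub, hmass⟩
  obtain ⟨m₀, ⟨S', hdy', hside', hSS', hS'U, hmass'⟩, hmin⟩ :=
    Int.exists_least_of_bdd hbddP hPne
  refine ⟨S', ⟨hdy', hS'U, hmass', ?_⟩, hSS'⟩
  intro S'' hdy'' hss hU''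
  by_contra hle
  push_neg at hle
  obtain ⟨m'', hside'', hcorners''⟩ := hdy''
  have hm'' : P m'' :=
    ⟨S'', ⟨m'', hside'', hcorners''⟩, hside'', hSS'.trans hss.subset, hU'', hle⟩
  have h1 := hmin m'' hm''
  have h2 : S'.side < S''.side := side_lt_of_ssubset S' S'' hss
  rw [hside', hside''] at h2
  have : -m₀ < -m'' := by
    by_contra hcon
    push_neg at hcon
    have := zpow_le_zpow_right₀ (by norm_num : (1:ℝ) ≤ 2) hcon
    linarith
  omega


end ScalingAux

open ScalingAux in
/-- The scaling property (1.4): for a dyadic scaling factor `C = 2^k` and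
`T = C^Q exp(-sup_U f)`, one has `D_{h+f}^ε(z,w;U) ≤ D_{h(·/C)}^{Tε}(Cz, Cw; CU)`. -/
theorem dist_scaling_inequality
    (Q : ℝ) (hQ : 0 < Q) (h f : ℂ → ℝ) (hcont : Continuous h) (hfcont : Continuous f)
    (U : Set ℂ) (hUne : U.Nonempty) (hUb : Bornology.IsBounded U)
    (ε : ℝ) (hε : 0 < ε) (k : ℤ) (C : ℝ) (hC : C = 2 ^ k)
    (T : ℝ) (hT : T = C ^ Q * Real.exp (-sSup (f '' U))) :
    ∀ z ∈ U, ∀ w ∈ U,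
      GDist (fun u => h u + f u) Q ε U z w ≤
        GDist (fun u => h (u / (C : ℂ))) Q (T * ε)
          ((fun u : ℂ => (C : ℂ) * u) '' U) ((C : ℂ) * z) ((C : ℂ) * w) := by
  intro z hz w hw
  have hCpos : 0 < C := by rw [hC]; positivity
  have hCC : ((C : ℝ) : ℂ) ≠ 0 := by exact_mod_cast hCpos.ne'
  have hCinv : C⁻¹ = (2:ℝ) ^ (-k) := by rw [hC, zpow_neg]
  set M := sSup (f '' U) with hM
  have hbdd : BddAbove (f '' U) := by
    have hcomp : IsCompact (f '' closure U) := (hUb.isCompact_closure).image hfcont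
    exact hcomp.bddAbove.mono (image_mono (f := f) subset_closure)
  have hMub : ∀ u ∈ U, f u ≤ M := fun u hu => le_csSup hbdd (mem_image_of_mem f hu)
  set hf : ℂ → ℝ := fun u => h u + f u with hhf
  set g : ℂ → ℝ := fun u => h (u / (C : ℂ)) with hg
  set CU : Set ℂ := (fun u : ℂ => (C : ℂ) * u) '' U with hCU
  apply le_sInf
  rintro n ⟨kc, rfl, Sc, hSc, hz0, hwk, hadj⟩
  -- the rescaled squares
  set ψ : DySquare → DySquare := fun S => scale C⁻¹ (inv_pos.mpr hCpos) S with hψ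
  have hscale_back : ∀ S : DySquare, scale C hCpos (ψ S) = S := fun S => scale_scale C hCpos S
  have hmem_psi : ∀ (S : DySquare) (u : ℂ), u ∈ (ψ S).toSet ↔ (C : ℂ) * u ∈ S.toSet := by
    intro S u
    rw [← hscale_back S, mem_scale_iff C hCpos]
    rw [hscale_back S]
  -- properties of ψ of a tiling square
  have hkey : ∀ j ≤ kc, (ψ (Sc j)).IsDyadic ∧ (ψ (Sc j)).toSet ⊆ U ∧
      Mass hf Q (ψ (Sc j)) ≤ ε := by
    intro j hj
    obtain ⟨hd, hsubCU, hmassc, -⟩ := hSc j hj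
    refine ⟨?_, ?_, ?_⟩
    · show (scale C⁻¹ (inv_pos.mpr hCpos) (Sc j)).IsDyadic
      rw [scale_congr hCinv]
      exact scale_dyadic (-k) (Sc j) hd (hCinv ▸ inv_pos.mpr hCpos)
    · intro u hu
      have := hsubCU ((hmem_psi (Sc j) u).1 hu)
      obtain ⟨v, hv, hvu⟩ := this
      rwa [← mul_left_cancel₀ hCC hvu]
    · -- mass bound
      have hml : Mass g Q (Sc j) = C ^ Q * Mass h Q (ψ (Sc j)) := by
        conv_lhs => rw [← hscale_back (Sc j)]
        exact mass_scale h Q C hCpos (ψ (Sc j))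
      have hCQpos : (0:ℝ) < C ^ Q := Real.rpow_pos_of_pos hCpos Q
      have hmh : Mass h Q (ψ (Sc j)) ≤ Real.exp (-M) * ε := by
        rw [hml, hT] at hmassc
        nlinarith [hmassc]
      -- circle average of f is at most M
      set S₀ := ψ (Sc j) with hS₀
      have hsubU : S₀.toSet ⊆ U := by
        intro u hu
        have := hsubCU ((hmem_psi (Sc j) u).1 hu)
        obtain ⟨v, hv, hvu⟩ := this
        rwa [← mul_left_cancel₀ hCC hvu]
      have havgf : circleAvg f (S₀.side / 2) S₀.center ≤ M := by
        apply circleAvg_le f hfcont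
        intro θ
        apply hMub
        apply hsubU
        exact circle_mem S₀ θ
      have hsplit : Mass hf Q S₀
          = Real.exp (circleAvg f (S₀.side / 2) S₀.center) * Mass h Q S₀ := by
        unfold Mass
        rw [hhf, circleAvg_add h f hcont hfcont, Real.exp_add]
        ring
      rw [hsplit]
      calc Real.exp (circleAvg f (S₀.side / 2) S₀.center) * Mass h Q S₀
          ≤ Real.exp M * (Real.exp (-M) * ε) := by
            apply mul_le_mul (Real.exp_le_exp.2 havgf) hmh (mass_nonneg h Q S₀)
              (Real.exp_nonneg M)
        _ = ε := by rw [← mul_assoc, ← Real.exp_add]; simp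
  -- choose tiling squares containing the rescaled squares
  have hex : ∀ j : ℕ, ∃ S' : DySquare, j ≤ kc →
      S' ∈ Tiling hf Q ε U ∧ (ψ (Sc j)).toSet ⊆ S'.toSet := by
    intro j
    by_cases hj : j ≤ kc
    · obtain ⟨hd, hsub, hmass⟩ := hkey j hj
      obtain ⟨S', h1, h2⟩ := exists_tiling_superset hf Q ε U hUb (ψ (Sc j)) hd hsub hmass
      exact ⟨S', fun _ => ⟨h1, h2⟩⟩
    · exact ⟨Sc 0, fun hj' => absurd hj' hj⟩
  choose F hF using hex
  refine sInf_le ⟨kc, rfl, F, ?_, ?_, ?_, ?_⟩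
  · intro j hj; exact (hF j hj).1
  · apply (hF 0 (Nat.zero_le kc)).2
    exact (hmem_psi (Sc 0) z).2 hz0
  · apply (hF kc le_rfl).2
    exact (hmem_psi (Sc kc) w).2 hwk
  · intro j hj1 hjk
    obtain ⟨a, ha, b, hb, hab⟩ := hadj j hj1 hjk
    refine ⟨a / (C : ℂ), ⟨?_, ?_⟩, b / (C : ℂ), ⟨?_, ?_⟩, ?_⟩
    · exact (hF (j-1) (le_trans (Nat.sub_le j 1) hjk)).2
        ((hmem_psi (Sc (j-1)) _).2 (by rw [mul_div_cancel₀ a hCC]; exact ha.1))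
    · exact (hF j hjk).2 ((hmem_psi (Sc j) _).2 (by rw [mul_div_cancel₀ a hCC]; exact ha.2))
    · exact (hF (j-1) (le_trans (Nat.sub_le j 1) hjk)).2
        ((hmem_psi (Sc (j-1)) _).2 (by rw [mul_div_cancel₀ b hCC]; exact hb.1))
    · exact (hF j hjk).2 ((hmem_psi (Sc j) _).2 (by rw [mul_div_cancel₀ b hCC]; exact hb.2))
    · intro e
      apply hab
      have e' : a / (C:ℂ) * C = b / (C:ℂ) * C := by rw [e]
      rwa [div_mul_cancel₀ a hCC, div_mul_cancel₀ b hCC] at e' 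


end
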